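/- Let A and B be sets and let f, g : A × B → ℝ be bounded functions. Then Stb(f + g) ≤ Stb(f) + Stb(g), where f + g is the pointwise sum. -/

import Mathlib

/-- The stability degree of a bounded function `f : A × B → ℝ`: the infimum of the set of
`ε > 0` such that there are no sequences `a : ℕ → A`, `b : ℕ → B` with
`|f (a i, b j) - f (a j, b i)| ≥ ε` for all `i < j`. -/
noncomputable def Stb {A B : Type*} (f : A × B → ℝ) : ℝ :=
  sInf {ε : ℝ | 0 < ε ∧ ¬ ∃ (a : ℕ → A) (b : ℕ → B), ∀ i j : ℕ, i < j →
    ε ≤ |f (a i, b j) - f (a j, b i)|}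

private lemma ramsey_step (c : ℕ → ℕ → Prop) (S : Set ℕ) (hS : S.Infinite) :
    ∃ (x : ℕ) (S' : Set ℕ), S'.Infinite ∧ S' ⊆ S ∧ x ∈ S ∧ (∀ y ∈ S', x < y) ∧
      ((∀ y ∈ S', c x y) ∨ (∀ y ∈ S', ¬ c x y)) := by
  obtain ⟨x, hx⟩ := hS.nonempty
  have hT : (S \ Set.Iic x).Infinite := hS.diff (Set.finite_Iic x)
  set T := S \ Set.Iic x with hTdef
  have hsplit : T = {y ∈ T | c x y} ∪ {y ∈ T | ¬ c x y} := by
    ext y; by_cases h : c x y <;> simp [h]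
  have : ({y ∈ T | c x y} ∪ {y ∈ T | ¬ c x y}).Infinite := hsplit ▸ hT
  rcases Set.infinite_union.mp this with h | h
  · exact ⟨x, {y ∈ T | c x y}, h, fun y hy => hy.1.1, hx,
      fun y hy => lt_of_not_ge fun h' => hy.1.2 h', Or.inl fun y hy => hy.2⟩
  · exact ⟨x, {y ∈ T | ¬ c x y}, h, fun y hy => hy.1.1, hx,
      fun y hy => lt_of_not_ge fun h' => hy.1.2 h', Or.inr fun y hy => hy.2⟩

/-- Infinite Ramsey theorem for pairs with two colors. -/
private lemma ramsey2 (c : ℕ → ℕ → Prop) :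
    ∃ φ : ℕ → ℕ, StrictMono φ ∧
      ((∀ i j, i < j → c (φ i) (φ j)) ∨ (∀ i j, i < j → ¬ c (φ i) (φ j))) := by
  classical
  -- build the chain of states
  let next : {S : Set ℕ // S.Infinite} → ℕ × {S : Set ℕ // S.Infinite} := fun p =>
    ⟨(ramsey_step c p.1 p.2).choose,
     ⟨(ramsey_step c p.1 p.2).choose_spec.choose,
      (ramsey_step c p.1 p.2).choose_spec.choose_spec.1⟩⟩
  let Sseq : ℕ → {S : Set ℕ // S.Infinite} := fun n =>
    (fun p => (next p).2)^[n] ⟨Set.univ, Set.infinite_univ⟩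
  let x : ℕ → ℕ := fun n => (next (Sseq n)).1
  have hSsucc : ∀ n, Sseq (n + 1) = (next (Sseq n)).2 := fun n =>
    Function.iterate_succ_apply' _ n _
  have hspec : ∀ n, (Sseq (n+1)).1 ⊆ (Sseq n).1 ∧ x n ∈ (Sseq n).1 ∧
      (∀ y ∈ (Sseq (n+1)).1, x n < y) ∧
      ((∀ y ∈ (Sseq (n+1)).1, c (x n) y) ∨ (∀ y ∈ (Sseq (n+1)).1, ¬ c (x n) y)) := by
    intro n
    have h := (ramsey_step c (Sseq n).1 (Sseq n).2).choose_spec.choose_spec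
    rw [hSsucc n]
    exact ⟨h.2.1, h.2.2.1, h.2.2.2.1, h.2.2.2.2⟩
  -- for n < m, x m ∈ Sseq (n+1)
  have hsub : ∀ n m, n ≤ m → (Sseq m).1 ⊆ (Sseq n).1 := by
    intro n m hnm
    induction m with
    | zero => simp_all
    | succ k ih =>
      rcases Nat.lt_or_ge n (k+1) with h | h
      · exact Set.Subset.trans (hspec k).1 (ih (Nat.lt_succ_iff.mp h))
      · have : n = k + 1 := le_antisymm hnm h
        subst this; exact subset_rfl
  have hmem : ∀ n m, n < m → x m ∈ (Sseq (n+1)).1 := fun n m hnm =>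
    hsub (n+1) m hnm ((hspec m).2.1)
  have hxmono : ∀ n m, n < m → x n < x m := fun n m hnm =>
    (hspec n).2.2.1 _ (hmem n m hnm)
  -- pigeonhole on the uniform color
  set G : Set ℕ := {n | ∀ y ∈ (Sseq (n+1)).1, c (x n) y} with hG
  have hGor : G.Infinite ∨ Gᶜ.Infinite := by
    by_contra h
    push_neg at h
    have : (G ∪ Gᶜ).Finite := h.1.union h.2
    rw [Set.union_compl_self] at this
    exact Set.infinite_univ this
  rcases hGor with h | h
  · refine ⟨fun n => x (Nat.nth (· ∈ G) n), ?_, Or.inl ?_⟩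
    · intro i j hij
      exact hxmono _ _ (Nat.nth_strictMono h hij)
    · intro i j hij
      have h1 : Nat.nth (· ∈ G) i ∈ G := Nat.nth_mem_of_infinite h i
      have h2 := Nat.nth_strictMono h hij
      exact h1 _ (hmem _ _ h2)
  · refine ⟨fun n => x (Nat.nth (· ∈ Gᶜ) n), ?_, Or.inr ?_⟩
    · intro i j hij
      exact hxmono _ _ (Nat.nth_strictMono h hij)
    · intro i j hij
      have h1 : Nat.nth (· ∈ Gᶜ) i ∈ Gᶜ := Nat.nth_mem_of_infinite h i
      have h2 := Nat.nth_strictMono h hij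
      rcases (hspec (Nat.nth (· ∈ Gᶜ) i)).2.2.2 with hc | hc
      · exact absurd hc h1
      · exact hc _ (hmem _ _ h2)

private lemma stb_nonempty {A B : Type*} (f : A × B → ℝ)
    (hf : ∃ C : ℝ, ∀ x : A × B, |f x| ≤ C) :
    {ε : ℝ | 0 < ε ∧ ¬ ∃ (a : ℕ → A) (b : ℕ → B), ∀ i j : ℕ, i < j →
      ε ≤ |f (a i, b j) - f (a j, b i)|}.Nonempty := by
  obtain ⟨C, hC⟩ := hf
  by_cases hA : Nonempty (A × B)
  · obtain ⟨x0⟩ := hA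
    have hC0 : 0 ≤ C := (abs_nonneg _).trans (hC x0)
    refine ⟨2 * C + 1, by linarith, ?_⟩
    rintro ⟨a, b, hab⟩
    have h01 := hab 0 1 one_pos
    have := hC (a 0, b 1)
    have := hC (a 1, b 0)
    have : |f (a 0, b 1) - f (a 1, b 0)| ≤ 2 * C := by
      calc |f (a 0, b 1) - f (a 1, b 0)| ≤ |f (a 0, b 1)| + |f (a 1, b 0)| := abs_sub _ _
        _ ≤ 2 * C := by linarith
    linarith
  · refine ⟨1, one_pos, ?_⟩
    rintro ⟨a, b, -⟩
    exact hA ⟨a 0, b 0⟩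

private lemma stb_bddBelow {A B : Type*} (f : A × B → ℝ) :
    BddBelow {ε : ℝ | 0 < ε ∧ ¬ ∃ (a : ℕ → A) (b : ℕ → B), ∀ i j : ℕ, i < j →
      ε ≤ |f (a i, b j) - f (a j, b i)|} :=
  ⟨0, fun ε hε => hε.1.le⟩

theorem stmt9 {A B : Type*} (f g : A × B → ℝ)
    (hf : ∃ C : ℝ, ∀ x : A × B, |f x| ≤ C)
    (hg : ∃ C : ℝ, ∀ x : A × B, |g x| ≤ C) :
    Stb (f + g) ≤ Stb f + Stb g := by
  classical
  set Sf := {ε : ℝ | 0 < ε ∧ ¬ ∃ (a : ℕ → A) (b : ℕ → B), ∀ i j : ℕ, i < j →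
      ε ≤ |f (a i, b j) - f (a j, b i)|} with hSf
  set Sg := {ε : ℝ | 0 < ε ∧ ¬ ∃ (a : ℕ → A) (b : ℕ → B), ∀ i j : ℕ, i < j →
      ε ≤ |g (a i, b j) - g (a j, b i)|} with hSg
  have key : ∀ ε ∈ Sf, ∀ δ ∈ Sg, Stb (f + g) ≤ ε + δ := by
    intro ε hε δ hδ
    refine csInf_le (stb_bddBelow _) ⟨by have := hε.1; have := hδ.1; linarith, ?_⟩
    rintro ⟨a, b, hab⟩
    obtain ⟨φ, hφ, hcol⟩ := ramsey2 (fun i j => ε ≤ |f (a i, b j) - f (a j, b i)|)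
    rcases hcol with hc | hc
    · exact hε.2 ⟨a ∘ φ, b ∘ φ, fun i j hij => hc i j hij⟩
    · refine hδ.2 ⟨a ∘ φ, b ∘ φ, fun i j hij => ?_⟩
      have h1 := hab (φ i) (φ j) (hφ hij)
      have h2 : |f (a (φ i), b (φ j)) - f (a (φ j), b (φ i))| < ε :=
        lt_of_not_ge (hc i j hij)
      have h3 : |(f + g) (a (φ i), b (φ j)) - (f + g) (a (φ j), b (φ i))| ≤
          |f (a (φ i), b (φ j)) - f (a (φ j), b (φ i))| +
          |g (a (φ i), b (φ j)) - g (a (φ j), b (φ i))| := by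
        simp only [Pi.add_apply]
        calc |f (a (φ i), b (φ j)) + g (a (φ i), b (φ j)) -
              (f (a (φ j), b (φ i)) + g (a (φ j), b (φ i)))|
            = |(f (a (φ i), b (φ j)) - f (a (φ j), b (φ i))) +
              (g (a (φ i), b (φ j)) - g (a (φ j), b (φ i)))| := by ring_nf
          _ ≤ _ := abs_add_le _ _
      simp only [Function.comp_apply]
      linarith
  have hfne := stb_nonempty f hf
  have hgne := stb_nonempty g hg
  have step1 : Stb (f + g) - Stb f ≤ Stb g := by
    refine le_csInf hgne fun δ hδ => ?_
    have : Stb (f + g) - δ ≤ Stb f := by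
      refine le_csInf hfne fun ε hε => ?_
      have := key ε hε δ hδ
      linarith
    linarith
  linarith
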